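/- Let 3 ≤ r ≤ n and fix a point T of PG(1,q^n). The number of distinct point sets of PG(1,q^n) that are tangent splashes of rank r with centre T, i.e. of the form B(W) for some K-subspace W of L^2 with dim_K W = r and dim_K(W ∩ T) = r-1, equals q^{n+1-r} · ∏_{i=0}^{r-2} (q^{n-i} - 1)/(q^{r-1-i} - 1). -/

import Mathlib

set_option maxHeartbeats 1000000
set_option linter.unusedSectionVars false

open Submodule Module

/-- `BSet L X` is the set of projective points (1-dimensional `L`-subspaces of `W`)
spanned by the nonzero vectors of `X`. -/
def BSet (L : Type*) [Field L] {W : Type*} [AddCommGroup W] [Module L W]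
    (X : Set W) : Set (Submodule L W) :=
  {P | ∃ x ∈ X, x ≠ 0 ∧ P = Submodule.span L {x}}

def Cosets (K L : Type*) [Field K] [Field L] [Algebra K L] (k : ℕ) : Type _ :=
  {C : Set L // ∃ U : Submodule K L, Module.finrank K ↥U = k ∧ ∃ a : L, C = {z | ∃ u ∈ U, z = a + u}}

section Counting

open Set
open Submodule Module Set

variable {K V : Type*} [Field K] [Fintype K] [AddCommGroup V] [Module K V] [Fintype V]

lemma card_li_tuples (k : ℕ) :
    Nat.card {f : Fin k → V // LinearIndependent K f} =
      ∏ i ∈ Finset.range k, (Fintype.card V - Fintype.card K ^ i) := by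
  classical
  induction k with
  | zero =>
      rw [Finset.prod_range_zero, Nat.card_eq_one_iff_unique.mpr]
      constructor
      · constructor
        intro a b
        ext i; exact absurd i.2 (by omega)
      · exact ⟨⟨finZeroElim, linearIndependent_empty_type⟩⟩
  | succ k ih =>
      have e : {f : Fin (k+1) → V // LinearIndependent K f} ≃
          Σ g : {f : Fin k → V // LinearIndependent K f},
            {x : V // x ∉ span K (Set.range g.1)} := by
        refine ⟨fun f => ⟨⟨Fin.tail f.1, ?_⟩, ⟨f.1 0, ?_⟩⟩,
                fun p => ⟨Fin.cons p.2.1 p.1.1, ?_⟩, ?_, ?_⟩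
        · have := f.2
          rw [← Fin.cons_self_tail f.1, linearIndependent_fin_cons] at this
          exact this.1
        · have := f.2
          rw [← Fin.cons_self_tail f.1, linearIndependent_fin_cons] at this
          exact this.2
        · exact linearIndependent_fin_cons.mpr ⟨p.1.2, p.2.2⟩
        · intro f; ext : 1; simp [Fin.cons_self_tail]
        · intro p
          rcases p with ⟨⟨g, hg⟩, ⟨x, hx⟩⟩; rfl
      rw [Nat.card_congr e, Nat.card_eq_fintype_card, Fintype.card_sigma]
      have hfiber : ∀ g : {f : Fin k → V // LinearIndependent K f},
          Fintype.card {x : V // x ∉ span K (Set.range g.1)} =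
            Fintype.card V - Fintype.card K ^ k := by
        intro g
        have h1 : Fintype.card {x : V // x ∈ span K (Set.range g.1)} = Fintype.card K ^ k := by
          rw [← Nat.card_eq_fintype_card]
          have : Nat.card (span K (Set.range g.1)) =
              Fintype.card K ^ finrank K (span K (Set.range g.1)) := by
            rw [Nat.card_eq_fintype_card]; exact card_eq_pow_finrank
          rw [this, finrank_span_eq_card g.2, Fintype.card_fin]
        rw [Fintype.card_subtype_compl, h1]
      rw [Finset.sum_congr rfl (fun g _ => hfiber g), Finset.sum_const, Finset.card_univ,
        ← Nat.card_eq_fintype_card, ih, Finset.prod_range_succ, smul_eq_mul, mul_comm]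

lemma card_li_in_subspace (k : ℕ) (U : Submodule K V) (hU : finrank K U = k) :
    Nat.card {f : Fin k → V // LinearIndependent K f ∧ span K (Set.range f) = U} =
      ∏ i ∈ Finset.range k, (Fintype.card K ^ k - Fintype.card K ^ i) := by
  classical
  have e : {f : Fin k → V // LinearIndependent K f ∧ span K (Set.range f) = U} ≃
      {g : Fin k → U // LinearIndependent K g} := by
    refine ⟨fun f => ⟨fun i => ⟨f.1 i, ?_⟩, ?_⟩, fun g => ⟨fun i => (g.1 i : V), ?_, ?_⟩, ?_, ?_⟩
    · have hm : f.1 i ∈ span K (Set.range f.1) := subset_span (Set.mem_range_self i)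
      rwa [f.2.2] at hm
    · exact f.2.1.of_comp U.subtype
    · exact g.2.map' U.subtype (ker_subtype U)
    · have htop : span K (Set.range g.1) = ⊤ := by
        apply eq_top_of_finrank_eq
        rw [finrank_span_eq_card g.2, Fintype.card_fin, hU]
      have hr : Set.range (fun i => (g.1 i : V)) = U.subtype '' Set.range g.1 := by
        ext x; simp [Submodule.subtype]
      rw [hr, ← Submodule.map_span, htop, Submodule.map_top, range_subtype]
    · intro f; rfl
    · intro g; rfl
  rw [Nat.card_congr e, card_li_tuples k]
  have hcard : Fintype.card U = Fintype.card K ^ k := by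
    rw [card_eq_pow_finrank (K := K), hU]
  rw [hcard]

lemma card_subspaces (k : ℕ) :
    Nat.card {U : Submodule K V // finrank K U = k} *
      ∏ i ∈ Finset.range k, (Fintype.card K ^ k - Fintype.card K ^ i) =
      ∏ i ∈ Finset.range k, (Fintype.card V - Fintype.card K ^ i) := by
  classical
  have e : {f : Fin k → V // LinearIndependent K f} ≃
      Σ U : {U : Submodule K V // finrank K U = k},
        {f : Fin k → V // LinearIndependent K f ∧ span K (Set.range f) = U.1} := by
    refine ⟨fun f => ⟨⟨span K (Set.range f.1), ?_⟩, ⟨f.1, f.2, rfl⟩⟩,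
            fun p => ⟨p.2.1, p.2.2.1⟩, fun f => rfl, ?_⟩
    · rw [finrank_span_eq_card f.2, Fintype.card_fin]
    · rintro ⟨⟨U, hU⟩, f, hf, hspan⟩
      dsimp at hspan
      subst hspan
      rfl
  have h := card_li_tuples (K := K) (V := V) k
  rw [Nat.card_congr e, Nat.card_eq_fintype_card, Fintype.card_sigma] at h
  have : ∀ U : {U : Submodule K V // finrank K U = k},
      Fintype.card {f : Fin k → V // LinearIndependent K f ∧ span K (Set.range f) = U.1} =
        ∏ i ∈ Finset.range k, (Fintype.card K ^ k - Fintype.card K ^ i) := by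
    intro U
    rw [← Nat.card_eq_fintype_card, card_li_in_subspace k U.1 U.2]
  rw [Finset.sum_congr rfl (fun U _ => this U), Finset.sum_const, Finset.card_univ,
    smul_eq_mul, ← Nat.card_eq_fintype_card] at h
  exact h



variable {K L : Type*} [Field K] [Field L] [Algebra K L] [Fintype K] [Fintype L]

lemma coset_eq_setOf (U : Submodule K L) (a : L) :
    {z : L | Submodule.Quotient.mk z = Submodule.Quotient.mk (p := U) a} =
      {z | ∃ u ∈ U, z = a + u} := by
  ext z
  simp only [Set.mem_setOf_eq, Submodule.Quotient.eq]
  constructor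
  · intro h; exact ⟨z - a, h, by ring⟩
  · rintro ⟨u, hu, rfl⟩; simpa using hu

lemma card_cosets (k : ℕ) :
    Nat.card (Cosets K L k) =
      Nat.card {U : Submodule K L // finrank K ↥U = k} *
        Fintype.card K ^ (finrank K L - k) := by
  classical
  have e : (Σ U : {U : Submodule K L // finrank K ↥U = k}, L ⧸ U.1) ≃ Cosets K L k := by
    refine Equiv.ofBijective
      (fun p => ⟨{z | Submodule.Quotient.mk z = p.2}, p.1.1, p.1.2, ?_⟩) ⟨?_, ?_⟩
    · obtain ⟨a, ha⟩ := Submodule.Quotient.mk_surjective _ p.2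
      exact ⟨a, by rw [← ha, coset_eq_setOf]⟩
    · rintro ⟨⟨U, hU⟩, c⟩ ⟨⟨U', hU'⟩, c'⟩ h
      obtain ⟨a, rfl⟩ := Submodule.Quotient.mk_surjective _ c
      obtain ⟨a', rfl⟩ := Submodule.Quotient.mk_surjective _ c'
      have h' : ({z : L | Submodule.Quotient.mk z = Submodule.Quotient.mk (p := U) a}) =
          {z : L | Submodule.Quotient.mk z = Submodule.Quotient.mk (p := U') a'} :=
        congrArg Subtype.val h
      rw [coset_eq_setOf, coset_eq_setOf] at h'
      obtain ⟨u₀, hu₀, hau⟩ : ∃ u ∈ U', a = a' + u := by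
        have : a ∈ {z | ∃ u ∈ U, z = a + u} := ⟨0, U.zero_mem, by ring⟩
        rw [h'] at this; exact this
      obtain ⟨w₀, hw₀, haw⟩ : ∃ w ∈ U, a' = a + w := by
        have : a' ∈ {z | ∃ u ∈ U', z = a' + u} := ⟨0, U'.zero_mem, by ring⟩
        rw [← h'] at this; exact this
      have hu₀U : u₀ ∈ U := by
        have : u₀ = -w₀ := by rw [haw] at hau; linear_combination -hau
        rw [this]; exact U.neg_mem hw₀
      have hUU' : U = U' := by
        ext u
        constructor
        · intro hu
          have hm : a + u ∈ {z | ∃ w ∈ U', z = a' + w} := by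
            rw [← h']; exact ⟨u, hu, rfl⟩
          obtain ⟨w, hw, hww⟩ := hm
          have : u = w - u₀ := by rw [hau] at hww; linear_combination hww
          rw [this]; exact U'.sub_mem hw hu₀
        · intro hu
          have hm : a' + u ∈ {z | ∃ w ∈ U, z = a + w} := by
            rw [h']; exact ⟨u, hu, rfl⟩
          obtain ⟨w, hw, hww⟩ := hm
          have : u = w + u₀ := by rw [hau] at hww; linear_combination hww
          rw [this]; exact U.add_mem hw hu₀U
      subst hUU'
      have hcc : Submodule.Quotient.mk (p := U) a = Submodule.Quotient.mk a' := by
        rw [Submodule.Quotient.eq, hau]; simpa using hu₀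
      rw [hcc]
    · rintro ⟨C, U, hU, a, rfl⟩
      exact ⟨⟨⟨U, hU⟩, Submodule.Quotient.mk a⟩, Subtype.ext (coset_eq_setOf U a)⟩
  rw [← Nat.card_congr e]
  haveI : ∀ U : Submodule K L, Finite (L ⧸ U) := fun U => Quotient.finite _
  letI : Fintype {U : Submodule K L // finrank K ↥U = k} := Fintype.ofFinite _
  letI : ∀ U : {U : Submodule K L // finrank K ↥U = k}, Fintype (L ⧸ U.1) :=
    fun U => Fintype.ofFinite _
  rw [Nat.card_eq_fintype_card, Fintype.card_sigma]
  have hQ : ∀ U : {U : Submodule K L // finrank K ↥U = k},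
      Fintype.card (L ⧸ U.1) = Fintype.card K ^ (finrank K L - k) := by
    intro U
    rw [card_eq_pow_finrank (K := K)]
    congr 1
    have := Submodule.finrank_quotient_add_finrank U.1
    omega
  rw [Finset.sum_congr rfl (fun U _ => hQ U), Finset.sum_const, Finset.card_univ, smul_eq_mul,
    Nat.card_eq_fintype_card]





lemma splash_card (r : ℕ) (hr : 3 ≤ r)
    (T : Submodule L (Fin 2 → L)) (hT : Module.finrank L T = 1) :
    Nat.card {S : Set (Submodule L (Fin 2 → L)) //
        ∃ W : Submodule K (Fin 2 → L), Module.finrank K W = r ∧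
          Module.finrank K ↥(W ⊓ T.restrictScalars K) = r - 1 ∧
          BSet L (W : Set (Fin 2 → L)) = S} = Nat.card (Cosets K L (r-1)) := by
  classical
  have h2 : finrank L (Fin 2 → L) = 2 := Module.finrank_fin_fun L
  -- a generator of T
  obtain ⟨v', hv'0, hv'span⟩ := finrank_eq_one_iff' (K := L) (V := T) |>.mp hT
  set v : Fin 2 → L := (v' : Fin 2 → L) with hv
  have hv0 : v ≠ 0 := by
    simpa [hv, Submodule.coe_eq_zero] using hv'0
  have hTv : T = span L {v} := by
    refine le_antisymm ?_ ?_
    · intro z hz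
      obtain ⟨cz, hcz⟩ := hv'span ⟨z, hz⟩
      exact mem_span_singleton.mpr ⟨cz, congrArg Subtype.val hcz⟩
    · rw [span_le, Set.singleton_subset_iff]
      exact v'.2
  -- a vector outside T
  have hTne : T ≠ ⊤ := by
    intro h
    rw [h, finrank_top, h2] at hT
    omega
  obtain ⟨w, hw⟩ : ∃ w, w ∉ T := by
    by_contra h
    push_neg at h
    exact hTne (Submodule.eq_top_iff'.mpr h)
  -- the basis (w, v)
  have li : LinearIndependent L ![w, v] := by
    rw [linearIndependent_fin2]
    refine ⟨by simpa using hv0, fun a ha => ?_⟩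
    apply hw
    rw [hTv]
    simp only [Matrix.cons_val_one, Matrix.head_cons, Matrix.cons_val_zero] at ha
    exact ha ▸ smul_mem _ a (mem_span_singleton_self v)
  have hcard2 : Fintype.card (Fin 2) = finrank L (Fin 2 → L) := by rw [Fintype.card_fin, h2]
  set B := basisOfLinearIndependentOfCardEqFinrank li hcard2 with hB
  have hB0 : B 0 = w := by rw [hB, coe_basisOfLinearIndependentOfCardEqFinrank]; rfl
  have hB1 : B 1 = v := by rw [hB, coe_basisOfLinearIndependentOfCardEqFinrank]; rfl
  set c := B.coord 0 with hcdef
  set d := B.coord 1 with hddef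
  have hrepr : ∀ z, z = c z • w + d z • v := by
    intro z
    conv_lhs => rw [← B.sum_repr z]
    rw [Fin.sum_univ_two, hB0, hB1, hcdef, hddef]
    simp [Basis.coord_apply]
  have hcw : c w = 1 := by rw [← hB0, hcdef]; simp
  have hdw : d w = 0 := by rw [← hB0, hddef]; simp [Basis.repr_self]
  have hcv : c v = 0 := by rw [← hB1, hcdef]; simp [Basis.repr_self]
  have hdv : d v = 1 := by rw [← hB1, hddef]; simp
  have hcK : ∀ (t : K) (z : Fin 2 → L), c (t • z) = algebraMap K L t * c z := by
    intro t z
    rw [← algebraMap_smul L t z, map_smul, smul_eq_mul]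
  have hdK : ∀ (t : K) (z : Fin 2 → L), d (t • z) = algebraMap K L t * d z := by
    intro t z
    rw [← algebraMap_smul L t z, map_smul, smul_eq_mul]
  have hTm : ∀ z, z ∈ T ↔ c z = 0 := by
    intro z
    constructor
    · intro hz
      rw [hTv, mem_span_singleton] at hz
      obtain ⟨e, rfl⟩ := hz
      rw [map_smul, smul_eq_mul, hcv, mul_zero]
    · intro h0
      rw [hTv, mem_span_singleton]
      refine ⟨d z, ?_⟩
      conv_rhs => rw [hrepr z]
      rw [h0, zero_smul, zero_add]
  -- affine points
  set pt : L → Submodule L (Fin 2 → L) := fun x => span L {w + x • v} with hptdef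
  have hpt_apply : ∀ x : L, pt x = span L {w + x • v} := fun _ => rfl
  have hvecc : ∀ x : L, c (w + x • v) = 1 := by
    intro x; rw [map_add, map_smul, smul_eq_mul, hcw, hcv, mul_zero, add_zero]
  have hvecd : ∀ x : L, d (w + x • v) = x := by
    intro x; rw [map_add, map_smul, smul_eq_mul, hdw, hdv, mul_one, zero_add]
  have hvec0 : ∀ x : L, w + x • v ≠ 0 := by
    intro x h
    have := hvecc x
    rw [h, map_zero] at this
    exact zero_ne_one this
  have hptT : ∀ x, pt x ≠ T := by
    intro x h
    have hm : w + x • v ∈ T := by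
      rw [← h, hpt_apply]; exact mem_span_singleton_self _
    rw [hTm, hvecc] at hm
    exact one_ne_zero hm
  have hptinj : ∀ x y, pt x = pt y → x = y := by
    intro x y h
    have hm : w + x • v ∈ span L {w + y • v} := by
      rw [← hpt_apply, ← h, hpt_apply]; exact mem_span_singleton_self _
    obtain ⟨e, he⟩ := mem_span_singleton.mp hm
    have h1 : e * 1 = 1 := by
      have := congrArg c he
      rwa [map_smul, smul_eq_mul, hvecc, hvecc] at this
    have h2 : e * y = x := by
      have := congrArg d he
      rwa [map_smul, smul_eq_mul, hvecd, hvecd] at this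
    rw [mul_one] at h1
    rw [h1, one_mul] at h2
    exact h2.symm
  have hspan_pt : ∀ z, c z ≠ 0 → span L {z} = pt (d z / c z) := by
    intro z hcz
    have hz : z = c z • (w + (d z / c z) • v) := by
      rw [smul_add, smul_smul, mul_div_cancel₀ _ hcz]
      exact hrepr z
    rw [hpt_apply]
    conv_lhs => rw [hz]
    exact span_singleton_smul_eq (isUnit_iff_ne_zero.mpr hcz) _
  have hspan_T : ∀ z, z ∈ T → z ≠ 0 → span L {z} = T := by
    intro z hz hz0
    apply Submodule.eq_of_le_of_finrank_eq
    · exact (span_singleton_le_iff_mem _ _).mpr hz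
    · rw [finrank_span_singleton hz0, hT]
  -- the K-linear embedding u ↦ u • v
  set j : L →ₗ[K] (Fin 2 → L) := (LinearMap.toSpanSingleton L _ v).restrictScalars K with hjdef
  have hj : ∀ u : L, j u = u • v := fun u => rfl
  have hjinj : Function.Injective j := by
    intro a b hab
    rw [hj, hj] at hab
    have : (a - b) • v = 0 := by rw [sub_smul, hab, sub_self]
    rcases smul_eq_zero.mp this with h | h
    · exact sub_eq_zero.mp h
    · exact absurd h hv0
  have hfinU : ∀ U : Submodule K L, finrank K ↥(U.map j) = finrank K ↥U :=
    fun U => ((Submodule.equivMapOfInjective j hjinj U).finrank_eq).symm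
  have hmemW : ∀ (U : Submodule K L) (g z : Fin 2 → L),
      z ∈ U.map j ⊔ (K ∙ g) ↔ ∃ u ∈ U, ∃ t : K, z = u • v + t • g := by
    intro U g z
    rw [Submodule.mem_sup]
    constructor
    · rintro ⟨y, hy, s, hs, rfl⟩
      obtain ⟨u, hu, rfl⟩ := Submodule.mem_map.mp hy
      obtain ⟨t, rfl⟩ := mem_span_singleton.mp hs
      exact ⟨u, hu, t, by rw [hj]⟩
    · rintro ⟨u, hu, t, rfl⟩
      exact ⟨j u, mem_map_of_mem hu, t • g, smul_mem _ t (mem_span_singleton_self g),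
        by rw [hj]⟩
  have halg : ∀ t : K, (t : K) ≠ 0 → algebraMap K L t ≠ 0 := by
    intro t ht h
    exact ht ((algebraMap K L).injective (by rw [h, map_zero]))
  have hcuv : ∀ u : L, c (u • v) = 0 := by
    intro u; rw [map_smul, smul_eq_mul, hcv, mul_zero]
  have hduv : ∀ u : L, d (u • v) = u := by
    intro u; rw [map_smul, smul_eq_mul, hdv, mul_one]
  -- core structural facts about W = U.map j ⊔ K ∙ g
  have h_inf : ∀ (U : Submodule K L) (g : Fin 2 → L), c g ≠ 0 →
      (U.map j ⊔ (K ∙ g)) ⊓ T.restrictScalars K = U.map j := by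
    intro U g hg
    apply le_antisymm
    · rintro z hz
      rw [Submodule.mem_inf] at hz
      obtain ⟨hz1, hz2⟩ := hz
      obtain ⟨u, hu, t, rfl⟩ := (hmemW U g _).mp hz1
      rw [Submodule.restrictScalars_mem, hTm, map_add, hcuv, zero_add, hcK] at hz2
      have ht : t = 0 := by
        by_contra ht
        exact (mul_ne_zero (halg t ht) hg) hz2
      rw [ht, zero_smul, add_zero]
      exact mem_map_of_mem hu
    · intro z hz
      rw [Submodule.mem_inf]
      refine ⟨Submodule.mem_sup_left hz, ?_⟩
      obtain ⟨u, hu, rfl⟩ := Submodule.mem_map.mp hz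
      rw [Submodule.restrictScalars_mem, hTm, hj, hcuv]
  have h_dim : ∀ (U : Submodule K L) (g : Fin 2 → L), c g ≠ 0 →
      finrank K ↥(U.map j ⊔ (K ∙ g)) = finrank K ↥U + 1 := by
    intro U g hg
    have hg0 : g ≠ 0 := by intro h; rw [h, map_zero] at hg; exact hg rfl
    have hinf_bot : (U.map j) ⊓ (K ∙ g) = ⊥ := by
      rw [eq_bot_iff]
      rintro z hz
      rw [Submodule.mem_inf] at hz
      obtain ⟨hz1, hz2⟩ := hz
      obtain ⟨u, hu, rfl⟩ := Submodule.mem_map.mp hz1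
      obtain ⟨t, ht⟩ := mem_span_singleton.mp hz2
      have : c (j u) = algebraMap K L t * c g := by rw [← ht, hcK]
      rw [hj, hcuv] at this
      have ht0 : t = 0 := by
        by_contra ht0
        exact (mul_ne_zero (halg t ht0) hg) this.symm
      rw [ht0, zero_smul] at ht
      rw [Submodule.mem_bot]
      exact ht.symm
    have := Submodule.finrank_sup_add_finrank_inf_eq (U.map j) (K ∙ g)
    rw [hinf_bot, finrank_bot, hfinU, finrank_span_singleton hg0] at this
    omega
  have h_bset : ∀ (U : Submodule K L) (g : Fin 2 → L), U ≠ ⊥ → c g ≠ 0 →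
      BSet L ((U.map j ⊔ (K ∙ g) : Submodule K (Fin 2 → L)) : Set (Fin 2 → L)) =
        insert T {P | ∃ x ∈ {x : L | ∃ u ∈ U, x = d g / c g + (c g)⁻¹ * u}, P = pt x} := by
    intro U g hUbot hg
    ext P
    constructor
    · rintro ⟨z, hz, hz0, rfl⟩
      rw [SetLike.mem_coe] at hz
      obtain ⟨u, hu, t, rfl⟩ := (hmemW U g _).mp hz
      by_cases ht : t = 0
      · subst ht
        rw [zero_smul, add_zero] at hz0 ⊢
        left
        exact hspan_T _ ((hTm _).mpr (hcuv u)) hz0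
      · right
        have hcz : c (u • v + t • g) = algebraMap K L t * c g := by
          rw [map_add, hcuv, zero_add, hcK]
        have hcz0 : c (u • v + t • g) ≠ 0 := by
          rw [hcz]; exact mul_ne_zero (halg t ht) hg
        have hdz : d (u • v + t • g) = u + algebraMap K L t * d g := by
          rw [map_add, hduv, hdK]
        refine ⟨d (u • v + t • g) / c (u • v + t • g), ⟨t⁻¹ • u, U.smul_mem _ hu, ?_⟩,
          hspan_pt _ hcz0⟩
        rw [hdz, hcz, Algebra.smul_def, map_inv₀]
        have ht' : algebraMap K L t ≠ 0 := halg t ht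
        field_simp
        ring
    · intro hP
      rcases Set.mem_insert_iff.mp hP with hPT | ⟨x, ⟨u, hu, hx⟩, hPx⟩
      · obtain ⟨u₀, hu₀, hu₀0⟩ := Submodule.exists_mem_ne_zero_of_ne_bot hUbot
        refine ⟨u₀ • v, ?_, ?_, ?_⟩
        · rw [SetLike.mem_coe]
          exact Submodule.mem_sup_left (by rw [← hj u₀]; exact mem_map_of_mem hu₀)
        · intro h
          rcases smul_eq_zero.mp h with h | h
          · exact hu₀0 h
          · exact hv0 h
        · rw [hPT]
          exact (hspan_T _ ((hTm _).mpr (hcuv u₀)) (by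
            intro h
            rcases smul_eq_zero.mp h with h | h
            · exact hu₀0 h
            · exact hv0 h)).symm
      · refine ⟨u • v + g, ?_, ?_, ?_⟩
        · rw [SetLike.mem_coe]
          refine (hmemW U g _).mpr ⟨u, hu, 1, ?_⟩
          rw [one_smul]
        · intro h
          have := congrArg c h
          rw [map_add, hcuv, zero_add, map_zero] at this
          exact hg this
        · have hcz : c (u • v + g) = c g := by rw [map_add, hcuv, zero_add]
          have hcz0 : c (u • v + g) ≠ 0 := by rw [hcz]; exact hg
          have hdz : d (u • v + g) = u + d g := by rw [map_add, hduv]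
          rw [hPx, hspan_pt _ hcz0, hcz, hdz, hx]
          congr 1
          field_simp
          ring
  -- the bijection from cosets to splashes
  have hrm1 : 2 ≤ r - 1 := by omega
  have hUbot_of : ∀ U : Submodule K L, finrank K ↥U = r - 1 → U ≠ ⊥ := by
    intro U hU h
    rw [h, finrank_bot] at hU
    omega
  set F : Cosets K L (r-1) → {S : Set (Submodule L (Fin 2 → L)) //
      ∃ W : Submodule K (Fin 2 → L), Module.finrank K W = r ∧
        Module.finrank K ↥(W ⊓ T.restrictScalars K) = r - 1 ∧
        BSet L (W : Set (Fin 2 → L)) = S} :=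
    fun C => ⟨insert T {P | ∃ x ∈ C.1, P = pt x}, by
      obtain ⟨U, hU, a, hC⟩ := C.2
      refine ⟨U.map j ⊔ (K ∙ (w + a • v)), ?_, ?_, ?_⟩
      · rw [h_dim U _ (by rw [hvecc]; exact one_ne_zero), hU]
        omega
      · rw [h_inf U _ (by rw [hvecc]; exact one_ne_zero), hfinU, hU]
      · rw [h_bset U _ (hUbot_of U hU) (by rw [hvecc]; exact one_ne_zero)]
        congr 1
        ext P
        simp only [Set.mem_setOf_eq, hC, hvecc, hvecd]
        constructor
        · rintro ⟨x, ⟨u, hu, hx⟩, rfl⟩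
          refine ⟨x, ⟨u, hu, ?_⟩, rfl⟩
          rw [hx]; field_simp
        · rintro ⟨x, ⟨u, hu, hx⟩, rfl⟩
          refine ⟨x, ⟨u, hu, ?_⟩, rfl⟩
          rw [hx]; field_simp⟩ with hFdef
  have hFinj : Function.Injective F := by
    intro C C' h
    have h' : insert T {P | ∃ x ∈ C.1, P = pt x} = insert T {P | ∃ x ∈ C'.1, P = pt x} :=
      congrArg Subtype.val h
    apply Subtype.ext
    ext x
    constructor
    · intro hx
      have : pt x ∈ insert T {P | ∃ y ∈ C'.1, P = pt y} := by
        rw [← h']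
        exact Set.mem_insert_iff.mpr (Or.inr ⟨x, hx, rfl⟩)
      rcases Set.mem_insert_iff.mp this with hPT | ⟨y, hy, hxy⟩
      · exact absurd hPT (hptT x)
      · rwa [hptinj x y hxy]
    · intro hx
      have : pt x ∈ insert T {P | ∃ y ∈ C.1, P = pt y} := by
        rw [h']
        exact Set.mem_insert_iff.mpr (Or.inr ⟨x, hx, rfl⟩)
      rcases Set.mem_insert_iff.mp this with hPT | ⟨y, hy, hxy⟩
      · exact absurd hPT (hptT x)
      · rwa [hptinj x y hxy]
  have hFsurj : Function.Surjective F := by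
    rintro ⟨S, W, hWr, hWT, hBS⟩
    -- recover the coset data from W
    set M : Submodule K (Fin 2 → L) := W ⊓ T.restrictScalars K with hMdef
    set U' : Submodule K L := M.map ((B.coord 1).restrictScalars K) with hU'def
    have hdres : ∀ z : Fin 2 → L, ((B.coord 1).restrictScalars K) z = d z := fun _ => rfl
    have hMU' : U'.map j = M := by
      apply le_antisymm
      · rintro z hz
        obtain ⟨u, hu, rfl⟩ := Submodule.mem_map.mp hz
        obtain ⟨y, hy, rfl⟩ := Submodule.mem_map.mp hu
        have hyT : y ∈ T := by
          rw [hMdef] at hy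
          exact Submodule.restrictScalars_mem K T y |>.mp (Submodule.mem_inf.mp hy).2
        have hcy : c y = 0 := (hTm y).mp hyT
        have : j (((B.coord 1).restrictScalars K) y) = y := by
          rw [hj, hdres]
          conv_rhs => rw [hrepr y]
          rw [hcy, zero_smul, zero_add]
        rw [this]
        exact hy
      · intro z hz
        have hzT : z ∈ T := by
          rw [hMdef] at hz
          exact Submodule.restrictScalars_mem K T z |>.mp (Submodule.mem_inf.mp hz).2
        have hcz : c z = 0 := (hTm z).mp hzT
        have : j (d z) = z := by
          rw [hj]
          conv_rhs => rw [hrepr z]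
          rw [hcz, zero_smul, zero_add]
        rw [← this]
        exact mem_map_of_mem (by rw [hU'def]; exact mem_map_of_mem hz)
    have hfinU' : finrank K ↥U' = r - 1 := by
      have := hfinU U'
      rw [hMU'] at this
      rw [← this, hMdef]
      exact hWT
    -- a vector of W outside T
    have hMW : M ≤ W := inf_le_left
    have hMltW : M < W := by
      refine lt_of_le_of_ne hMW ?_
      intro h
      rw [h] at hWT
      rw [hWr] at hWT
      omega
    obtain ⟨g, hgW, hgM⟩ := SetLike.exists_of_lt hMltW
    have hcg : c g ≠ 0 := by
      intro h
      exact hgM (Submodule.mem_inf.mpr ⟨hgW, (Submodule.restrictScalars_mem K T g).mpr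
        ((hTm g).mpr h)⟩)
    have hWeq : W = U'.map j ⊔ (K ∙ g) := by
      symm
      apply Submodule.eq_of_le_of_finrank_eq
      · refine sup_le ?_ ?_
        · rw [hMU']; exact hMW
        · rw [Submodule.span_le, Set.singleton_subset_iff]
          exact hgW
      · rw [h_dim U' g hcg, hfinU', hWr]
        omega
    -- the coset
    set γ : L := c g with hγ
    set a : L := d g / c g with ha
    set μ : L →ₗ[K] L := (LinearMap.mulLeft K (γ⁻¹)).restrictScalars K with hμ
    have hμa : ∀ x : L, μ x = γ⁻¹ * x := fun _ => rfl
    have hμinj : Function.Injective μ := by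
      intro x y hxy
      rw [hμa, hμa] at hxy
      exact mul_left_cancel₀ (inv_ne_zero hcg) hxy
    have hfinU₂ : finrank K ↥(U'.map μ) = r - 1 := by
      rw [((Submodule.equivMapOfInjective μ hμinj U').finrank_eq).symm]
      exact hfinU'
    refine ⟨⟨{z | ∃ u ∈ U'.map μ, z = a + u}, U'.map μ, hfinU₂, a, rfl⟩, ?_⟩
    apply Subtype.ext
    show insert T {P | ∃ x ∈ {z | ∃ u ∈ U'.map μ, z = a + u}, P = pt x} = S
    rw [← hBS, hWeq, h_bset U' g (hUbot_of U' hfinU') hcg]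
    congr 1
    ext P
    simp only [Set.mem_setOf_eq]
    constructor
    · rintro ⟨x, ⟨u, hu, hx⟩, rfl⟩
      obtain ⟨u', hu', rfl⟩ := Submodule.mem_map.mp hu
      exact ⟨x, ⟨u', hu', by simp [hx, hμa, ha, hγ]⟩, rfl⟩
    · rintro ⟨x, ⟨u, hu, hx⟩, rfl⟩
      refine ⟨x, ⟨μ u, mem_map_of_mem hu, by simp [hx, hμa, ha, hγ]⟩, rfl⟩
  exact (Nat.card_congr (Equiv.ofBijective F ⟨hFinj, hFsurj⟩)).symm

end Counting

section Main

variable {K L : Type*}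

lemma gaussian_ratio (q r n : ℕ) (hq2 : 2 ≤ q) (hr : 3 ≤ r) (hrn : r ≤ n)
    (N : ℕ) (hNat : N * ∏ i ∈ Finset.range (r-1), (q^(r-1) - q^i)
      = ∏ i ∈ Finset.range (r-1), (q^n - q^i)) :
    (N : ℚ) = ∏ i ∈ Finset.range (r - 1),
        ((q : ℚ) ^ (n - i) - 1) / ((q : ℚ) ^ (r - 1 - i) - 1) := by
  have hpow_le : ∀ i k : ℕ, i ≤ k → q^i ≤ q^k := fun i k h =>
    Nat.pow_le_pow_right (by omega) h
  have c1 : ∀ m : ℕ, r - 1 ≤ m → ((∏ i ∈ Finset.range (r-1), (q^m - q^i) : ℕ) : ℚ)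
      = ∏ i ∈ Finset.range (r-1), ((q:ℚ)^i * ((q:ℚ)^(m-i) - 1)) := by
    intro m hm
    rw [Nat.cast_prod]
    refine Finset.prod_congr rfl ?_
    intro i hi
    rw [Finset.mem_range] at hi
    rw [Nat.cast_sub (hpow_le i m (by omega))]
    push_cast
    have hsplit : (q:ℚ)^m = (q:ℚ)^i * (q:ℚ)^(m-i) := by
      rw [← pow_add]; congr 1; omega
    rw [hsplit]; ring
  have hq1Q : (1:ℚ) < (q:ℚ) := by exact_mod_cast hq2
  have hq0 : (q:ℚ) ≠ 0 := by positivity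
  have hcast : (N:ℚ) * ∏ i ∈ Finset.range (r-1), ((q:ℚ)^i * ((q:ℚ)^(r-1-i) - 1))
      = ∏ i ∈ Finset.range (r-1), ((q:ℚ)^i * ((q:ℚ)^(n-i) - 1)) := by
    have := congrArg (fun x : ℕ => (x:ℚ)) hNat
    simp only [Nat.cast_mul] at this
    rw [c1 (r-1) le_rfl, c1 n (by omega)] at this
    exact this
  rw [Finset.prod_mul_distrib, Finset.prod_mul_distrib] at hcast
  set P : ℚ := ∏ i ∈ Finset.range (r-1), (q:ℚ)^i with hPdef
  have hPne : P ≠ 0 := Finset.prod_ne_zero_iff.mpr (fun i _ => pow_ne_zero _ hq0)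
  have hDne : ∀ i ∈ Finset.range (r-1), ((q:ℚ)^(r-1-i) - 1) ≠ 0 := by
    intro i hi
    rw [Finset.mem_range] at hi
    have : (1:ℚ) < (q:ℚ)^(r-1-i) := one_lt_pow₀ hq1Q (by omega)
    intro h
    rw [sub_eq_zero] at h
    rw [← h] at this
    exact lt_irrefl _ this
  have hDprod : (∏ i ∈ Finset.range (r-1), ((q:ℚ)^(r-1-i) - 1)) ≠ 0 :=
    Finset.prod_ne_zero_iff.mpr hDne
  rw [Finset.prod_div_distrib]
  rw [eq_div_iff hDprod]
  have : P * ((N:ℚ) * ∏ i ∈ Finset.range (r-1), ((q:ℚ)^(r-1-i) - 1))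
      = P * ∏ i ∈ Finset.range (r-1), ((q:ℚ)^(n-i) - 1) := by
    calc P * ((N:ℚ) * ∏ i ∈ Finset.range (r-1), ((q:ℚ)^(r-1-i) - 1))
        = (N:ℚ) * (P * ∏ i ∈ Finset.range (r-1), ((q:ℚ)^(r-1-i) - 1)) := by ring
      _ = P * ∏ i ∈ Finset.range (r-1), ((q:ℚ)^(n-i) - 1) := hcast
  exact mul_left_cancel₀ hPne this

end Main

/-- the number of distinct tangent splashes of rank `r` on `PG(1,q^n)`
with a fixed centre `T`. -/
theorem count_tangent_splashes_with_centre
    (K L : Type*) [Field K] [Field L] [Algebra K L] [Fintype K] [Fintype L]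
    (q r n : ℕ) (hq : Fintype.card K = q)
    (hr : 3 ≤ r) (hrn : r ≤ n) (hrank : Module.finrank K L = n)
    (T : Submodule L (Fin 2 → L)) (hT : Module.finrank L T = 1) :
    (Nat.card {S : Set (Submodule L (Fin 2 → L)) //
        ∃ W : Submodule K (Fin 2 → L), Module.finrank K W = r ∧
          Module.finrank K ↥(W ⊓ T.restrictScalars K) = r - 1 ∧
          BSet L (W : Set (Fin 2 → L)) = S} : ℚ) =
      (q : ℚ) ^ (n + 1 - r) *
        ∏ i ∈ Finset.range (r - 1),
          ((q : ℚ) ^ (n - i) - 1) / ((q : ℚ) ^ (r - 1 - i) - 1) := by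
  classical
  have hq2 : 2 ≤ q := by rw [← hq]; exact Fintype.one_lt_card
  have hcardL : Fintype.card L = q ^ n := by
    rw [card_eq_pow_finrank (K := K) (V := L), hq, hrank]
  set N : ℕ := Nat.card {U : Submodule K L // finrank K ↥U = r - 1} with hNdef
  have hNat : N * ∏ i ∈ Finset.range (r-1), (q^(r-1) - q^i)
      = ∏ i ∈ Finset.range (r-1), (q^n - q^i) := by
    have := card_subspaces (K := K) (V := L) (r-1)
    rw [hq, hcardL] at this
    exact this
  have hcount : Nat.card {S : Set (Submodule L (Fin 2 → L)) //
        ∃ W : Submodule K (Fin 2 → L), Module.finrank K W = r ∧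
          Module.finrank K ↥(W ⊓ T.restrictScalars K) = r - 1 ∧
          BSet L (W : Set (Fin 2 → L)) = S} = N * q ^ (n + 1 - r) := by
    rw [splash_card r hr T hT, card_cosets (r-1), hq, hrank]
    congr 2
    omega
  rw [hcount]
  push_cast
  rw [gaussian_ratio q r n hq2 hr hrn N hNat]
  ring
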